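/- arXiv:1308.2583 — 4 statements merged into one kernel-verified Lean document; each statement's English description precedes it below -/
import Mathlib

section
/- The operators h_n^i ω = ∫_I (φ_n^i)*ω on polynomial differential forms on the n-simplex, where φ_n^i(u, t⃗) = u·t⃗ + (1−u)·e_i, satisfy the homotopy identity d∘h_n^i + h_n^i∘d = id − ε_n^i, where ε_n^i is evaluation at the vertex e_i. -/
noncomputable section

open MvPolynomial

/- We model the DGCA `Ω*(Δⁿ)` of polynomial differential forms on the standard
`n`-simplex in the affine chart centred at the vertex `e_i` (coordinates
`x_j, j ≠ i`, the vertex `e_i` being the origin; the relation `Σ x_j = 1`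
eliminates one coordinate, so forms are free polynomial forms in `n` variables):
a form is a family `ω : Finset (Fin n) → K[x₁,…,x_n]`, the component `ω S` being
the coefficient of `dx_S`. -/

/-- Polynomial differential forms on the simplex (in the affine chart based at the
vertex): `ω = Σ_S ω_S dx_S`. -/
abbrev SForm (n : ℕ) (K : Type*) [CommRing K] :=
  Finset (Fin n) → MvPolynomial (Fin n) K

/-- The de Rham differential `d`. -/
def dForm {n : ℕ} {K : Type*} [CommRing K] (ω : SForm n K) : SForm n K :=
  fun S => ∑ j ∈ S,
    ((-1 : MvPolynomial (Fin n) K) ^ (S.filter (· < j)).card) *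
      MvPolynomial.pderiv j (ω (S.erase j))

/-- The integral `∫₀¹ u^{k-1} f(u·x) du`: on a monomial `c·x^α` it gives
`c·x^α / (k + |α|)`. -/
def scaleInt {n : ℕ} {K : Type*} [Field K] [CharZero K] (k : ℕ)
    (p : MvPolynomial (Fin n) K) : MvPolynomial (Fin n) K :=
  ∑ α ∈ p.support,
    MvPolynomial.monomial α
      (MvPolynomial.coeff α p / ((k + α.sum fun _ e => e : ℕ) : K))

/-- The homotopy operator `h_n^i ω = ∫_I (φ_n^i)* ω` associated with the linear
contraction `φ_n^i(u, x) = u·x + (1−u)·e_i` of the simplex onto the vertex `e_i`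
(the origin of the chart): explicitly
`(h ω)_S = Σ_{j ∉ S} ± x_j ∫₀¹ u^{|S|} ω_{S ∪ {j}}(u x) du`. -/
def hOp {n : ℕ} {K : Type*} [Field K] [CharZero K] (ω : SForm n K) : SForm n K :=
  fun S => ∑ j ∈ Sᶜ,
    ((-1 : MvPolynomial (Fin n) K) ^ (S.filter (· < j)).card) *
      (MvPolynomial.X j * scaleInt (S.card + 1) (ω (insert j S)))

/-- Evaluation `ε_n^i` at the vertex `e_i` (the origin of the chart): it keeps the
constant term of the function part and kills all forms of positive degree. -/
def evalVertex {n : ℕ} {K : Type*} [CommRing K] (ω : SForm n K) : SForm n K :=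
  fun S => if S = ∅ then MvPolynomial.C (MvPolynomial.constantCoeff (ω ∅)) else 0

section Aux
variable {n : ℕ} {K : Type*} [Field K] [CharZero K]

lemma coeff_scaleInt (k : ℕ) (p : MvPolynomial (Fin n) K) (β : Fin n →₀ ℕ) :
    coeff β (scaleInt k p) = coeff β p / ((k + β.sum fun _ e => e : ℕ) : K) := by
  unfold scaleInt
  rw [MvPolynomial.coeff_sum]
  simp only [MvPolynomial.coeff_monomial]
  rw [Finset.sum_ite_eq' p.support β]
  split_ifs with h
  · rfl
  · rw [MvPolynomial.notMem_support_iff.mp h, zero_div]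

lemma scaleInt_monomial (k : ℕ) (α : Fin n →₀ ℕ) (c : K) :
    scaleInt k (monomial α c) =
      monomial α (c / ((k + α.sum fun _ e => e : ℕ) : K)) := by
  ext β
  rw [coeff_scaleInt, coeff_monomial, coeff_monomial]
  split_ifs with h
  · subst h; rfl
  · rw [zero_div]

lemma scaleInt_add (k : ℕ) (p q : MvPolynomial (Fin n) K) :
    scaleInt k (p + q) = scaleInt k p + scaleInt k q := by
  ext β
  simp [coeff_scaleInt, add_div]

lemma scaleInt_C_mul (k : ℕ) (a : K) (p : MvPolynomial (Fin n) K) :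
    scaleInt k (C a * p) = C a * scaleInt k p := by
  ext β
  simp [coeff_scaleInt, coeff_C_mul, mul_div_assoc]

lemma scaleInt_sum (k : ℕ) {ι : Type*} (s : Finset ι) (f : ι → MvPolynomial (Fin n) K) :
    scaleInt k (∑ i ∈ s, f i) = ∑ i ∈ s, scaleInt k (f i) := by
  ext β
  simp [coeff_scaleInt, MvPolynomial.coeff_sum, Finset.sum_div]

lemma sum_sub_single {α : Fin n →₀ ℕ} {j : Fin n} (h : α j ≠ 0) :
    ((α - Finsupp.single j 1).sum fun _ e => e) + 1 = α.sum fun _ e => e := by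
  have hle : Finsupp.single j 1 ≤ α := by
    rwa [Finsupp.single_le_iff, Nat.one_le_iff_ne_zero]
  have h1 : (α - Finsupp.single j 1) + Finsupp.single j 1 = α := tsub_add_cancel_of_le hle
  calc ((α - Finsupp.single j 1).sum fun _ e => e) + 1
      = ((α - Finsupp.single j 1).sum fun _ e => e) +
        ((Finsupp.single j 1).sum fun _ e => e) := by
        rw [Finsupp.sum_single_index]; rfl
    _ = α.sum fun _ e => e := by
        rw [← Finsupp.sum_add_index' (fun _ => rfl) (fun _ _ _ => rfl), h1]

lemma pderiv_scaleInt (k : ℕ) (j : Fin n) (p : MvPolynomial (Fin n) K) :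
    pderiv j (scaleInt k p) = scaleInt (k + 1) (pderiv j p) := by
  induction p using MvPolynomial.induction_on' with
  | monomial α c =>
    rw [scaleInt_monomial, pderiv_monomial, pderiv_monomial, scaleInt_monomial]
    by_cases h : α j = 0
    · simp [h]
    · congr 1
      rw [div_mul_eq_mul_div]
      congr 2
      have := sum_sub_single (α := α) (j := j) h
      omega
  | add p q hp hq =>
    rw [scaleInt_add, map_add, map_add, scaleInt_add, hp, hq]

lemma euler_scale (s : ℕ) (p : MvPolynomial (Fin n) K) :
    (C (s : K)) * scaleInt s p + ∑ j : Fin n, X j * scaleInt (s + 1) (pderiv j p)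
      = p - if s = 0 then C (constantCoeff p) else 0 := by
  induction p using MvPolynomial.induction_on' with
  | monomial α c =>
    have hm : ∀ j : Fin n, X j * scaleInt (s + 1) (pderiv j (monomial α c))
        = monomial α (c * (α j : K) / ((s + α.sum fun _ e => e : ℕ) : K)) := by
      intro j
      rw [pderiv_monomial, scaleInt_monomial]
      by_cases h : α j = 0
      · simp [h]
      · have hsum := sum_sub_single (α := α) (j := j) h
        have hd : ((s + 1 + (α - Finsupp.single j 1).sum fun _ e => e : ℕ) : K)
            = ((s + α.sum fun _ e => e : ℕ) : K) := by
          congr 1; omega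
        rw [hd]
        have hle : Finsupp.single j 1 ≤ α := by
          rwa [Finsupp.single_le_iff, Nat.one_le_iff_ne_zero]
        have hα : Finsupp.single j 1 + (α - Finsupp.single j 1) = α := by
          rw [add_comm]; exact tsub_add_cancel_of_le hle
        rw [← pow_one (X j : MvPolynomial (Fin n) K), ← monomial_single_add, hα]
    rw [Finset.sum_congr rfl fun j _ => hm j]
    rw [scaleInt_monomial, C_mul_monomial, ← map_sum (monomial α)]
    have hsum : ∑ j : Fin n, (c * (α j : K) / ((s + α.sum fun _ e => e : ℕ) : K))
        = c * ((α.sum fun _ e => e : ℕ) : K) / ((s + α.sum fun _ e => e : ℕ) : K) := by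
      rw [← Finset.sum_div, ← Finset.mul_sum]
      congr 2
      rw [Finsupp.sum_fintype _ _ (fun _ => rfl)]
      push_cast
      rfl
    rw [hsum]
    by_cases h0 : s + (α.sum fun _ e => e) = 0
    · have hs : s = 0 := by omega
      have hm0 : (α.sum fun _ e => e) = 0 := by omega
      have hα0 : α = 0 := by
        ext x
        have := Finsupp.sum_fintype α (fun _ e => e) (fun _ => rfl)
        rw [hm0] at this
        have := Finset.sum_eq_zero_iff.mp this.symm
        exact this x (Finset.mem_univ x)
      subst hα0
      simp [hs, hm0, constantCoeff_monomial]
    · have hne : (((s + α.sum fun _ e => e : ℕ)) : K) ≠ 0 := Nat.cast_ne_zero.mpr h0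
      rw [← map_add (monomial α)]
      have : (s : K) * (c / ((s + α.sum fun _ e => e : ℕ) : K))
          + c * ((α.sum fun _ e => e : ℕ) : K) / ((s + α.sum fun _ e => e : ℕ) : K) = c := by
        rw [mul_div_assoc', ← add_div, div_eq_iff hne]
        push_cast
        ring
      rw [show ((s:K) * (c / ((s + α.sum fun _ e => e : ℕ) : K))
          + c * ((α.sum fun _ e => e : ℕ) : K) / ((s + α.sum fun _ e => e : ℕ) : K)) = c
        from this]
      split_ifs with hs
      · have : α ≠ 0 := by
          intro h; subst h
          simp [hs, Finsupp.sum_zero_index] at h0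
        simp [constantCoeff_monomial, this]
      · simp
  | add p q hp hq =>
    simp only [scaleInt_add, map_add, mul_add, Finset.sum_add_distrib, C_add] at hp hq ⊢
    split_ifs at hp hq ⊢ with hs
    · linear_combination hp + hq
    · linear_combination hp + hq

lemma neg_one_pow_mul_self {R : Type*} [Monoid R] [HasDistribNeg R] (a : ℕ) :
    (-1 : R) ^ a * (-1 : R) ^ a = 1 := by
  rw [← pow_add]
  exact Even.neg_one_pow ⟨a, rfl⟩

lemma neg_one_pow_C (m : ℕ) :
    ((-1 : MvPolynomial (Fin n) K)) ^ m = C ((-1 : K) ^ m) := by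
  rw [map_pow, map_neg, map_one]

lemma sign_cross {R : Type*} [CommRing R] (S : Finset (Fin n)) {j k : Fin n}
    (hj : j ∉ S) (hk : k ∈ S) :
    (-1 : R) ^ (S.filter (· < k)).card * (-1 : R) ^ ((S.erase k).filter (· < j)).card
      = -((-1 : R) ^ (S.filter (· < j)).card *
          (-1 : R) ^ ((insert j S).filter (· < k)).card) := by
  have hjk : j ≠ k := fun h => hj (h ▸ hk)
  rw [Finset.filter_erase, Finset.filter_insert]
  rcases lt_or_gt_of_ne hjk with h | h
  · rw [Finset.erase_eq_of_notMem (by simp [not_lt.mpr h.le]),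
      if_pos h, Finset.card_insert_of_notMem (by simp [hj]), pow_succ]
    ring
  · have hkmem : k ∈ S.filter (· < j) := Finset.mem_filter.mpr ⟨hk, h⟩
    have := Finset.card_erase_add_one hkmem
    rw [if_neg (not_lt.mpr h.le), ← this, pow_succ]
    ring

lemma filter_lt_erase_self (S : Finset (Fin n)) (j : Fin n) :
    (S.erase j).filter (· < j) = S.filter (· < j) := by
  rw [Finset.filter_erase]
  exact Finset.erase_eq_of_notMem (by simp)

lemma filter_lt_insert_self (S : Finset (Fin n)) (j : Fin n) :
    (insert j S).filter (· < j) = S.filter (· < j) := by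
  rw [Finset.filter_insert, if_neg (lt_irrefl j)]

end Aux

/-- The operators `h_n^i ω = ∫_I (φ_n^i)* ω` on polynomial
differential forms on the `n`-simplex, where `φ_n^i(u, x) = u·x + (1−u)·e_i`,
satisfy the homotopy identity `d ∘ h_n^i + h_n^i ∘ d = id − ε_n^i`, with `ε_n^i`
the evaluation at the vertex `e_i`. -/
theorem stmt10 {n : ℕ} {K : Type*} [Field K] [CharZero K] (ω : SForm n K) :
    dForm (hOp ω) + hOp (dForm ω) = ω - evalVertex ω := by
  funext S
  simp only [Pi.add_apply, Pi.sub_apply]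
  have key1 : dForm (hOp ω) S =
      (∑ j ∈ S, (scaleInt S.card (ω S)
          + X j * scaleInt (S.card + 1) (pderiv j (ω S))))
      + ∑ j ∈ S, ∑ k ∈ Sᶜ,
          (C ((-1 : K) ^ (S.filter (· < j)).card
              * (-1 : K) ^ ((S.erase j).filter (· < k)).card)
            * (X k * scaleInt (S.card + 1) (pderiv j (ω (insert k (S.erase j)))))) := by
    simp only [dForm, hOp]
    rw [← Finset.sum_add_distrib]
    refine Finset.sum_congr rfl fun j hj => ?_
    rw [Finset.card_erase_add_one hj, Finset.compl_erase,
      Finset.sum_insert (by simp [hj]), map_add, mul_add]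
    congr 1
    · rw [Finset.insert_erase hj, filter_lt_erase_self, neg_one_pow_C,
        pderiv_C_mul, ← mul_assoc, ← C_mul, neg_one_pow_mul_self, C_1, one_mul,
        pderiv_mul, pderiv_X_self, one_mul, pderiv_scaleInt]
    · rw [map_sum, Finset.mul_sum]
      refine Finset.sum_congr rfl fun k hk => ?_
      have hkj : k ≠ j := by
        intro h; subst h; exact (Finset.mem_compl.mp hk) hj
      rw [neg_one_pow_C, neg_one_pow_C, pderiv_C_mul, pderiv_mul,
        pderiv_X_of_ne hkj, zero_mul, zero_add, pderiv_scaleInt,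
        ← mul_assoc, ← C_mul]
  have key2 : hOp (dForm ω) S =
      (∑ j ∈ Sᶜ, X j * scaleInt (S.card + 1) (pderiv j (ω S)))
      + ∑ j ∈ Sᶜ, ∑ k ∈ S,
          (C ((-1 : K) ^ (S.filter (· < j)).card
              * (-1 : K) ^ ((insert j S).filter (· < k)).card)
            * (X j * scaleInt (S.card + 1) (pderiv k (ω (insert j (S.erase k)))))) := by
    simp only [dForm, hOp]
    rw [← Finset.sum_add_distrib]
    refine Finset.sum_congr rfl fun j hj => ?_
    have hjS : j ∉ S := Finset.mem_compl.mp hj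
    rw [Finset.sum_insert hjS, scaleInt_add, mul_add, mul_add]
    congr 1
    · rw [Finset.erase_insert hjS, filter_lt_insert_self, neg_one_pow_C,
        scaleInt_C_mul,
        show ∀ (a : K) (x r : MvPolynomial (Fin n) K),
            C a * (x * (C a * r)) = C a * C a * (x * r) from
          fun a x r => by ring,
        ← C_mul, neg_one_pow_mul_self, C_1, one_mul]
    · rw [scaleInt_sum, Finset.mul_sum, Finset.mul_sum]
      refine Finset.sum_congr rfl fun k hk => ?_
      have hjk : j ≠ k := fun h => hjS (h ▸ hk)
      rw [Finset.erase_insert_of_ne hjk, neg_one_pow_C, neg_one_pow_C,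
        scaleInt_C_mul,
        show ∀ (a b : K) (x r : MvPolynomial (Fin n) K),
            C a * (x * (C b * r)) = C (a * b) * (x * r) from
          fun a b x r => by rw [C_mul]; ring]
  have cancel :
      (∑ j ∈ S, ∑ k ∈ Sᶜ,
          (C ((-1 : K) ^ (S.filter (· < j)).card
              * (-1 : K) ^ ((S.erase j).filter (· < k)).card)
            * (X k * scaleInt (S.card + 1) (pderiv j (ω (insert k (S.erase j)))))))
      + (∑ j ∈ Sᶜ, ∑ k ∈ S,
          (C ((-1 : K) ^ (S.filter (· < j)).card
              * (-1 : K) ^ ((insert j S).filter (· < k)).card)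
            * (X j * scaleInt (S.card + 1) (pderiv k (ω (insert j (S.erase k))))))) = 0 := by
    rw [Finset.sum_comm, ← Finset.sum_add_distrib]
    refine Finset.sum_eq_zero fun k hk => ?_
    rw [← Finset.sum_add_distrib]
    refine Finset.sum_eq_zero fun j hj => ?_
    have hkS : k ∉ S := Finset.mem_compl.mp hk
    rw [← add_mul, ← C_add, sign_cross S hkS hj, neg_add_cancel, map_zero, zero_mul]
  rw [key1, key2,
    show ∀ a b c d : MvPolynomial (Fin n) K, a + b + (c + d) = (a + c) + (b + d) from
      fun a b c d => by ring,
    cancel, add_zero, Finset.sum_add_distrib, Finset.sum_const, add_assoc,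
    Finset.sum_add_sum_compl, nsmul_eq_mul, ← C_eq_coe_nat, euler_scale]
  congr 1
  simp only [evalVertex]
  by_cases hS : S = ∅
  · subst hS; simp
  · rw [if_neg hS, if_neg (fun h => hS (Finset.card_eq_zero.mp h))]


end
end

section
/- Given infinity morphisms f = (f₁,f₂), g = (g₁,g₂), h = (h₁,h₂) between 2-term Leibniz infinity algebras V and W, if θ₁ is a 2-term infinity homotopy from f to g and τ₁ is a 2-term infinity homotopy from g to h, then θ₁ + τ₁ is a 2-term infinity homotopy from f to h. -/
/-- A 2-term Leibniz infinity algebra on `V₀ ⊕ V₁`: structure maps `l₁, l₂, l₃`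
(the degree-0 binary bracket `l₂` has components `l₂ : V₀⊗V₀ → V₀`,
`l₂l : V₀⊗V₁ → V₁`, `l₂r : V₁⊗V₀ → V₁`) satisfying the truncated higher Jacobi
identities (a)–(e). -/
structure TwoTermLeibniz (K : Type*) [Field K] (V₀ V₁ : Type*)
    [AddCommGroup V₀] [Module K V₀] [AddCommGroup V₁] [Module K V₁] where
  l₁ : V₁ →ₗ[K] V₀
  l₂ : V₀ →ₗ[K] V₀ →ₗ[K] V₀
  l₂l : V₀ →ₗ[K] V₁ →ₗ[K] V₁
  l₂r : V₁ →ₗ[K] V₀ →ₗ[K] V₁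
  l₃ : V₀ →ₗ[K] V₀ →ₗ[K] V₀ →ₗ[K] V₁
  ha₁ : ∀ x h, l₁ (l₂l x h) = l₂ x (l₁ h)
  ha₂ : ∀ h x, l₁ (l₂r h x) = l₂ (l₁ h) x
  hb : ∀ h k, l₂l (l₁ h) k = l₂r h (l₁ k)
  hc : ∀ x y z, l₁ (l₃ x y z) = l₂ x (l₂ y z) - l₂ y (l₂ x z) - l₂ (l₂ x y) z
  hd₁ : ∀ x y h, l₃ x y (l₁ h) = l₂l x (l₂l y h) - l₂l y (l₂l x h) - l₂l (l₂ x y) h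
  hd₂ : ∀ x h y, l₃ x (l₁ h) y = l₂l x (l₂r h y) - l₂r h (l₂ x y) - l₂r (l₂l x h) y
  hd₃ : ∀ h x y, l₃ (l₁ h) x y = l₂r h (l₂ x y) - l₂l x (l₂r h y) - l₂r (l₂r h x) y
  he : ∀ w x y z,
    l₂r (l₃ w x y) z + l₂l w (l₃ x y z) - l₂l x (l₃ w y z) + l₂l y (l₃ w x z)
      - l₃ (l₂ w x) y z + l₃ w (l₂ x y) z - l₃ x (l₂ w y) z - l₃ w x (l₂ y z)
      + l₃ w y (l₂ x z) - l₃ x y (l₂ w z) = 0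

/-- An infinity morphism `(f₀, f₁, f₂)` between 2-term Leibniz infinity algebras:
a chain map `(f₀, f₁)` together with a degree-1 bilinear map `f₂ : V₀⊗V₀ → W₁`
satisfying the truncated morphism identities (a)–(d). -/
structure LeibMorphism {K : Type*} [Field K] {V₀ V₁ W₀ W₁ : Type*}
    [AddCommGroup V₀] [Module K V₀] [AddCommGroup V₁] [Module K V₁]
    [AddCommGroup W₀] [Module K W₀] [AddCommGroup W₁] [Module K W₁]
    (LV : TwoTermLeibniz K V₀ V₁) (LW : TwoTermLeibniz K W₀ W₁) where
  f₀ : V₀ →ₗ[K] W₀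
  f₁ : V₁ →ₗ[K] W₁
  f₂ : V₀ →ₗ[K] V₀ →ₗ[K] W₁
  ma : ∀ h, LW.l₁ (f₁ h) = f₀ (LV.l₁ h)
  mb : ∀ x y, LW.l₂ (f₀ x) (f₀ y) + LW.l₁ (f₂ x y) = f₀ (LV.l₂ x y)
  mc₁ : ∀ x h, LW.l₂l (f₀ x) (f₁ h) = f₁ (LV.l₂l x h) - f₂ x (LV.l₁ h)
  mc₂ : ∀ h x, LW.l₂r (f₁ h) (f₀ x) = f₁ (LV.l₂r h x) - f₂ (LV.l₁ h) x
  md : ∀ x y z,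
    LW.l₃ (f₀ x) (f₀ y) (f₀ z) - LW.l₂r (f₂ x y) (f₀ z)
        + LW.l₂l (f₀ x) (f₂ y z) - LW.l₂l (f₀ y) (f₂ x z)
      = f₁ (LV.l₃ x y z) + f₂ (LV.l₂ x y) z - f₂ x (LV.l₂ y z) + f₂ y (LV.l₂ x z)

/-- A 2-term infinity homotopy `θ : f ⇒ g` between infinity morphisms of 2-term
Leibniz infinity algebras: a degree-1 linear map `θ : V₀ → W₁` satisfying the
homotopy identities (a), (b), (c). -/
def IsHomotopy {K : Type*} [Field K] {V₀ V₁ W₀ W₁ : Type*}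
    [AddCommGroup V₀] [Module K V₀] [AddCommGroup V₁] [Module K V₁]
    [AddCommGroup W₀] [Module K W₀] [AddCommGroup W₁] [Module K W₁]
    {LV : TwoTermLeibniz K V₀ V₁} {LW : TwoTermLeibniz K W₀ W₁}
    (f g : LeibMorphism LV LW) (θ : V₀ →ₗ[K] W₁) : Prop :=
  (∀ x, g.f₀ x - f.f₀ x = LW.l₁ (θ x)) ∧
  (∀ h, g.f₁ h - f.f₁ h = θ (LV.l₁ h)) ∧
  (∀ x y, g.f₂ x y - f.f₂ x y
    = θ (LV.l₂ x y) - LW.l₂l (f.f₀ x) (θ y) - LW.l₂r (θ x) (g.f₀ y))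

/-- If `θ` is a 2-term infinity homotopy from `f` to `g` and `τ` one
from `g` to `h`, then `θ + τ` is a 2-term infinity homotopy from `f` to `h`. -/
theorem stmt15 {K : Type*} [Field K] {V₀ V₁ W₀ W₁ : Type*}
    [AddCommGroup V₀] [Module K V₀] [AddCommGroup V₁] [Module K V₁]
    [AddCommGroup W₀] [Module K W₀] [AddCommGroup W₁] [Module K W₁]
    {LV : TwoTermLeibniz K V₀ V₁} {LW : TwoTermLeibniz K W₀ W₁}
    (f g h : LeibMorphism LV LW) (θ τ : V₀ →ₗ[K] W₁)
    (hθ : IsHomotopy f g θ) (hτ : IsHomotopy g h τ) :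
    IsHomotopy f h (θ + τ) := by
  obtain ⟨ha, hb, hc⟩ := hθ
  obtain ⟨ta, tb, tc⟩ := hτ
  refine ⟨fun x => ?_, fun x => ?_, fun x y => ?_⟩
  · simp only [LinearMap.add_apply, map_add]
    rw [← ha x, ← ta x]; abel
  · simp only [LinearMap.add_apply]
    rw [← hb x, ← tb x]; abel
  · have e1 : LW.l₂l (g.f₀ x) (τ y) - LW.l₂l (f.f₀ x) (τ y)
        = LW.l₂r (θ x) (h.f₀ y) - LW.l₂r (θ x) (g.f₀ y) := by
      rw [← map_sub, ← LinearMap.sub_apply, ← map_sub, ha x, ta y]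
      exact LW.hb _ _
    have e2 := sub_eq_iff_eq_add.mp e1
    simp only [LinearMap.add_apply, map_add]
    have key : h.f₂ x y - f.f₂ x y = (g.f₂ x y - f.f₂ x y) + (h.f₂ x y - g.f₂ x y) := by abel
    rw [key, hc x y, tc x y, e2]
    abel
end

section
/- The vertical composition of 2-term infinity homotopies between infinity morphisms of 2-term Leibniz infinity algebras, given by τ₁∘₁θ₁ = τ₁ + θ₁, is associative and admits the zero map as identity; hence hom-sets of infinity morphisms with 2-term infinity homotopies form a category (groupoid). -/
/-- Vertical composition of 2-term infinity homotopies, given by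
`τ ∘₁ θ = τ + θ`, is well defined (closed), associative, admits the zero map as
identity, and every homotopy is invertible: hom-sets of infinity morphisms with
2-term infinity homotopies form a category (indeed a groupoid). -/
theorem stmt16 {K : Type*} [Field K] {V₀ V₁ W₀ W₁ : Type*}
    [AddCommGroup V₀] [Module K V₀] [AddCommGroup V₁] [Module K V₁]
    [AddCommGroup W₀] [Module K W₀] [AddCommGroup W₁] [Module K W₁]
    (LV : TwoTermLeibniz K V₀ V₁) (LW : TwoTermLeibniz K W₀ W₁) :
    (∀ f : LeibMorphism LV LW, IsHomotopy f f (0 : V₀ →ₗ[K] W₁)) ∧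
    (∀ (f g h : LeibMorphism LV LW) (θ τ : V₀ →ₗ[K] W₁),
      IsHomotopy f g θ → IsHomotopy g h τ → IsHomotopy f h (τ + θ)) ∧
    (∀ θ τ υ : V₀ →ₗ[K] W₁, υ + (τ + θ) = (υ + τ) + θ) ∧
    (∀ (f g : LeibMorphism LV LW) (θ : V₀ →ₗ[K] W₁),
      IsHomotopy f g θ → θ + 0 = θ ∧ 0 + θ = θ) ∧
    (∀ (f g : LeibMorphism LV LW) (θ : V₀ →ₗ[K] W₁),
      IsHomotopy f g θ → IsHomotopy g f (-θ)) := by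
  refine ⟨?_, ?_, ?_, ?_, ?_⟩
  · intro f
    refine ⟨fun x => by simp, fun h => by simp, fun x y => by simp⟩
  · rintro f g h θ τ ⟨hθ0, hθ1, hθ2⟩ ⟨hτ0, hτ1, hτ2⟩
    refine ⟨fun x => ?_, fun k => ?_, fun x y => ?_⟩
    · have e1 := hθ0 x; have e2 := hτ0 x
      simp only [LinearMap.add_apply, map_add]
      rw [← e1, ← e2]; abel
    · have e1 := hθ1 k; have e2 := hτ1 k
      simp only [LinearMap.add_apply]
      rw [← e1, ← e2]; abel
    · have e1 := hθ2 x y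
      have e2 := hτ2 x y
      have key : LW.l₂l (g.f₀ x) (τ y)
          = LW.l₂l (f.f₀ x) (τ y) + LW.l₂r (θ x) (h.f₀ y) - LW.l₂r (θ x) (g.f₀ y) := by
        have k1 : LW.l₂l (g.f₀ x - f.f₀ x) (τ y) = LW.l₂r (θ x) (h.f₀ y - g.f₀ y) := by
          rw [hθ0 x, hτ0 y]; exact LW.hb _ _
        simp only [map_sub, LinearMap.sub_apply] at k1
        linear_combination (norm := abel) k1
      have main : h.f₂ x y - f.f₂ x y = (g.f₂ x y - f.f₂ x y) + (h.f₂ x y - g.f₂ x y) := by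
        abel
      rw [main, e1, e2, key]
      simp only [LinearMap.add_apply, map_add]
      abel
  · intro θ τ υ; abel
  · intro f g θ _; exact ⟨add_zero θ, zero_add θ⟩
  · rintro f g θ ⟨hθ0, hθ1, hθ2⟩
    refine ⟨fun x => ?_, fun k => ?_, fun x y => ?_⟩
    · have := hθ0 x
      simp only [LinearMap.neg_apply, map_neg]
      linear_combination (norm := abel) -this
    · have := hθ1 k
      simp only [LinearMap.neg_apply]
      linear_combination (norm := abel) -this
    · have e1 := hθ2 x y
      have k1 : LW.l₂l (g.f₀ x - f.f₀ x) (θ y) = LW.l₂r (θ x) (g.f₀ y - f.f₀ y) := by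
        rw [hθ0 x, hθ0 y]; exact LW.hb _ _
      simp only [map_sub, LinearMap.sub_apply] at k1
      simp only [LinearMap.neg_apply, map_neg]
      linear_combination (norm := abel) -e1 - k1
end

section
/- For the horizontal composition of 2-term infinity homotopies, the two candidate formulas agree: if θ₁ : f ⇒ g (between morphisms V → W) and τ₁ : f' ⇒ g' (between morphisms W → X), then g'₁θ₁ + τ₁f₁ = f'₁θ₁ + τ₁g₁. -/
/-- The two candidate formulas for the horizontal composite of 2-term
infinity homotopies agree: if `θ : f ⇒ g` (between morphisms `V → W`) and
`τ : f' ⇒ g'` (between morphisms `W → X`), then `g'₁ θ + τ f₁ = f'₁ θ + τ g₁`. -/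
theorem stmt17 {K : Type*} [Field K] {V₀ V₁ W₀ W₁ X₀ X₁ : Type*}
    [AddCommGroup V₀] [Module K V₀] [AddCommGroup V₁] [Module K V₁]
    [AddCommGroup W₀] [Module K W₀] [AddCommGroup W₁] [Module K W₁]
    [AddCommGroup X₀] [Module K X₀] [AddCommGroup X₁] [Module K X₁]
    {LV : TwoTermLeibniz K V₀ V₁} {LW : TwoTermLeibniz K W₀ W₁}
    {LX : TwoTermLeibniz K X₀ X₁}
    (f g : LeibMorphism LV LW) (f' g' : LeibMorphism LW LX)
    (θ : V₀ →ₗ[K] W₁) (τ : W₀ →ₗ[K] X₁)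
    (hθ : IsHomotopy f g θ) (hτ : IsHomotopy f' g' τ) :
    ∀ x : V₀, g'.f₁ (θ x) + τ (f.f₀ x) = f'.f₁ (θ x) + τ (g.f₀ x) := by
  intro x
  have h1 := hτ.2.1 (θ x)
  have h2 := hθ.1 x
  have : g'.f₁ (θ x) - f'.f₁ (θ x) = τ (g.f₀ x) - τ (f.f₀ x) := by
    rw [h1, ← map_sub, ← h2]
  have h3 := sub_eq_sub_iff_add_eq_add.mp this
  rw [add_comm (τ (g.f₀ x))] at h3
  exact h3
end
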